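/- Slow solution under overdamping: let λ > 0 and let δ : [0,∞) → [0,∞) be continuous with δ(t) ≥ λ for all t ≥ T, for some T ≥ 0. Then there exist T* ≥ T and a solution u of u'' + 2δ(t)u' + λ²u = 0 with |u(t)| ≥ t·e^{−λt} for all t ≥ T*. -/

import Mathlib

open Set Real Filter
open scoped NNReal

set_option linter.unusedVariables false
set_option linter.unusedSectionVars false

section GenODE

variable {E : Type*} [NormedAddCommGroup E] [NormedSpace ℝ E] [CompleteSpace E]

/-- Local existence for a vector field with linear growth, on a short interval. -/
lemma ode_local_exists (v : ℝ → E → E) (hc : ∀ x, Continuous fun t => v t x)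
    (h0 : ∀ t, v t 0 = 0) (K : ℝ≥0) {a b t₀ : ℝ}
    (hK : ∀ t ∈ Icc a b, LipschitzWith K (v t))
    (ht₀ : t₀ ∈ Icc a b) (hsmall : (K : ℝ) * (b - a) ≤ 1 / 2) (x₀ : E) :
    ∃ f : ℝ → E, f t₀ = x₀ ∧
      ∀ t ∈ Icc a b, HasDerivWithinAt f (v t (f t)) (Icc a b) t := by
  have hnorm : ∀ t ∈ Icc a b, ∀ x : E, ‖v t x‖ ≤ (K : ℝ) * ‖x‖ := by
    intro t ht x
    have := (hK t ht).dist_le_mul x 0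
    simpa [h0 t, dist_eq_norm] using this
  have hab : a ≤ b := ht₀.1.trans ht₀.2
  have hpl : IsPicardLindelof v (tmin := a) (tmax := b) ⟨t₀, ht₀⟩ x₀ (‖x₀‖₊ + 1) 0
      (K * (2 * ‖x₀‖₊ + 1)) K := by
    refine ⟨fun t ht => (hK t ht).lipschitzOnWith,
      fun x _ => (hc x).continuousOn, ?_, ?_⟩
    · intro t ht x hx
      refine (hnorm t ht x).trans ?_
      simp only [NNReal.coe_mul, NNReal.coe_add, coe_nnnorm, NNReal.coe_one,
        NNReal.coe_ofNat] at hx ⊢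
      have hx' : ‖x‖ ≤ 2 * ‖x₀‖ + 1 := by
        have := norm_le_norm_add_norm_sub' x x₀
        have hd : ‖x - x₀‖ ≤ ‖x₀‖ + 1 := by
          rw [← dist_eq_norm]; exact Metric.mem_closedBall.1 hx
        linarith
      have : (0:ℝ) ≤ (K:ℝ) := K.coe_nonneg
      nlinarith
    · simp only [NNReal.coe_mul, NNReal.coe_add, coe_nnnorm, NNReal.coe_one,
        NNReal.coe_ofNat, NNReal.coe_zero, sub_zero]
      have hm : max (b - t₀) (t₀ - a) ≤ b - a := by
        apply max_le <;> [linarith [ht₀.1]; linarith [ht₀.2]]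
      have h1 : (0:ℝ) ≤ 2 * ‖x₀‖ + 1 := by positivity
      have h2 : (0:ℝ) ≤ (K:ℝ) := K.coe_nonneg
      have h3 : (0:ℝ) ≤ max (b - t₀) (t₀ - a) := le_max_of_le_left (by linarith [ht₀.1, ht₀.2])
      calc (K : ℝ) * (2 * ‖x₀‖ + 1) * max (b - t₀) (t₀ - a)
          ≤ (K : ℝ) * (2 * ‖x₀‖ + 1) * (b - a) := by
            apply mul_le_mul_of_nonneg_left hm (by positivity)
        _ = ((K : ℝ) * (b - a)) * (2 * ‖x₀‖ + 1) := by ring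
        _ ≤ (1/2) * (2 * ‖x₀‖ + 1) := by
            apply mul_le_mul_of_nonneg_right hsmall h1
        _ ≤ ‖x₀‖ + 1 := by linarith
  exact hpl.exists_eq_forall_mem_Icc_hasDerivWithinAt₀

/-- Glue two solutions matching at `c`. -/
lemma ode_glue (v : ℝ → E → E) {a c b : ℝ} (hac : a ≤ c) (hcb : c ≤ b) {f g : ℝ → E}
    (hfg : f c = g c)
    (hf : ∀ t ∈ Icc a c, HasDerivWithinAt f (v t (f t)) (Icc a c) t)
    (hg : ∀ t ∈ Icc c b, HasDerivWithinAt g (v t (g t)) (Icc c b) t) :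
    ∃ F : ℝ → E, (∀ t, t ≤ c → F t = f t) ∧ (∀ t ∈ Icc c b, F t = g t) ∧
      ∀ t ∈ Icc a b, HasDerivWithinAt F (v t (F t)) (Icc a b) t := by
  classical
  set F : ℝ → E := fun t => if t ≤ c then f t else g t with hF
  have eqf : ∀ t, t ≤ c → F t = f t := fun t ht => if_pos ht
  have eqg : ∀ t ∈ Icc c b, F t = g t := by
    intro t ht
    by_cases h : t ≤ c
    · have : t = c := le_antisymm h ht.1
      simp [F, h, this, hfg]
    · simp [F, h]
  refine ⟨F, eqf, eqg, ?_⟩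
  intro t ht
  by_cases h1 : t ≤ c
  · have Hf : HasDerivWithinAt F (v t (F t)) (Icc a c) t := by
      rw [eqf t h1]
      exact (hf t ⟨ht.1, h1⟩).congr (fun s hs => eqf s hs.2) (eqf t h1)
    rcases eq_or_lt_of_le h1 with rfl | hlt
    · have Hg : HasDerivWithinAt F (v t (F t)) (Icc t b) t := by
        rw [eqf t le_rfl, hfg]
        exact (hg t ⟨le_rfl, hcb⟩).congr (fun s hs => eqg s hs) (eqg t ⟨le_rfl, hcb⟩)
      have := Hf.union Hg
      rwa [Set.Icc_union_Icc_eq_Icc hac hcb] at this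
    · apply Hf.mono_of_mem_nhdsWithin
      rw [mem_nhdsWithin]
      exact ⟨Iio c, isOpen_Iio, hlt, fun s hs => ⟨hs.2.1, hs.1.le⟩⟩
  · push_neg at h1
    have Hg : HasDerivWithinAt F (v t (F t)) (Icc c b) t := by
      rw [eqg t ⟨h1.le, ht.2⟩]
      exact (hg t ⟨h1.le, ht.2⟩).congr (fun s hs => eqg s hs) (eqg t ⟨h1.le, ht.2⟩)
    apply Hg.mono_of_mem_nhdsWithin
    rw [mem_nhdsWithin]
    exact ⟨Ioi c, isOpen_Ioi, h1, fun s hs => ⟨hs.1.le, hs.2.2⟩⟩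


/-- Existence on `[a, b]` starting from the left endpoint, by chaining. -/
lemma ode_chain_right (v : ℝ → E → E) (hc : ∀ x, Continuous fun t => v t x)
    (h0 : ∀ t, v t 0 = 0)
    (hlip : ∀ a b : ℝ, ∃ K : ℝ≥0, ∀ t ∈ Icc a b, LipschitzWith K (v t))
    {a b : ℝ} (hab : a ≤ b) (x₀ : E) :
    ∃ f : ℝ → E, f a = x₀ ∧
      ∀ t ∈ Icc a b, HasDerivWithinAt f (v t (f t)) (Icc a b) t := by
  obtain ⟨K, hK⟩ := hlip a b
  set h : ℝ := 1 / (2 * (K : ℝ) + 2) with hh_def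
  have hKnn : (0:ℝ) ≤ (K : ℝ) := K.coe_nonneg
  have hhpos : 0 < h := by positivity
  have hKh : (K : ℝ) * h ≤ 1 / 2 := by
    rw [hh_def]
    rw [mul_one_div, div_le_div_iff₀ (by positivity) (by norm_num)]
    linarith
  have main : ∀ n : ℕ, ∃ f : ℝ → E, f a = x₀ ∧
      ∀ t ∈ Icc a (min b (a + n * h)),
        HasDerivWithinAt f (v t (f t)) (Icc a (min b (a + n * h))) t := by
    intro n
    induction n with
    | zero =>
      have e0 : min b (a + (0:ℕ) * h) = a := by
        push_cast
        simp [min_eq_right hab]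
      rw [e0]
      exact ode_local_exists v hc h0 K
        (fun t ht => hK t ⟨ht.1, ht.2.trans hab⟩) ⟨le_rfl, le_rfl⟩ (by simp) x₀
    | succ n ih =>
      obtain ⟨f, hfa, hf⟩ := ih
      by_cases hb : b ≤ a + n * h
      · have e1 : min b (a + n * h) = b := min_eq_left hb
        have e2 : min b (a + (n + 1 : ℕ) * h) = b := by
          apply min_eq_left
          push_cast
          nlinarith
        rw [e2]; rw [e1] at hf
        exact ⟨f, hfa, hf⟩
      · push_neg at hb
        set c : ℝ := a + n * h with hc_def
        have hac : a ≤ c := by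
          have : (0:ℝ) ≤ n * h := by positivity
          linarith
        have e1 : min b c = c := min_eq_right hb.le
        rw [e1] at hf
        set c' : ℝ := min b (c + h) with hc'_def
        have hcc' : c ≤ c' := le_min hb.le (by linarith)
        have hc'b : c' ≤ b := min_le_left _ _
        have e2 : min b (a + (n + 1 : ℕ) * h) = c' := by
          rw [hc'_def, hc_def]; congr 1; push_cast; ring
        obtain ⟨g, hgc, hg⟩ := ode_local_exists v hc h0 K
          (fun t ht => hK t ⟨hac.trans ht.1, ht.2.trans hc'b⟩)
          (⟨le_rfl, hcc'⟩ : c ∈ Icc c c')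
          (by
            have : c' - c ≤ h := by
              have := min_le_right b (c + h)
              rw [hc'_def]; linarith [min_le_right b (c + h)]
            nlinarith) (f c)
        obtain ⟨F, hF1, _, hF3⟩ := ode_glue v hac hcc' hgc.symm hf hg
        rw [e2]
        exact ⟨F, by rw [hF1 a hac, hfa], hF3⟩
  obtain ⟨n, hn⟩ := exists_nat_gt ((b - a) / h)
  have hble : b ≤ a + n * h := by
    rw [div_lt_iff₀ hhpos] at hn
    linarith
  obtain ⟨f, h1, h2⟩ := main n
  rw [min_eq_left hble] at h2
  exact ⟨f, h1, h2⟩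

/-- Existence on `[a, b]` with prescribed value at any `t₀ ∈ [a, b]`. -/
lemma ode_chain_center (v : ℝ → E → E) (hc : ∀ x, Continuous fun t => v t x)
    (h0 : ∀ t, v t 0 = 0)
    (hlip : ∀ a b : ℝ, ∃ K : ℝ≥0, ∀ t ∈ Icc a b, LipschitzWith K (v t))
    {a b t₀ : ℝ} (ht₀ : t₀ ∈ Icc a b) (x₀ : E) :
    ∃ f : ℝ → E, f t₀ = x₀ ∧
      ∀ t ∈ Icc a b, HasDerivWithinAt f (v t (f t)) (Icc a b) t := by
  -- forward part on [t₀, b]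
  obtain ⟨f₁, hf₁v, hf₁⟩ := ode_chain_right v hc h0 hlip ht₀.2 x₀
  -- backward part via time reversal
  set w : ℝ → E → E := fun s x => -(v (a + t₀ - s) x) with hw_def
  have hwc : ∀ x, Continuous fun s => w s x := by
    intro x
    exact ((hc x).comp (by continuity)).neg
  have hw0 : ∀ s, w s 0 = 0 := by intro s; simp [w, h0]
  have hwlip : ∀ α β : ℝ, ∃ K : ℝ≥0, ∀ s ∈ Icc α β, LipschitzWith K (w s) := by
    intro α β
    obtain ⟨K, hK⟩ := hlip (a + t₀ - β) (a + t₀ - α)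
    refine ⟨K, fun s hs => ?_⟩
    exact (hK _ ⟨by linarith [hs.2], by linarith [hs.1]⟩).neg
  obtain ⟨g, hgv, hg⟩ := ode_chain_right w hwc hw0 hwlip ht₀.1 x₀
  set f₂ : ℝ → E := fun s => g (a + t₀ - s) with hf₂_def
  have hf₂v : f₂ t₀ = x₀ := by simp [f₂, hgv]
  have hf₂ : ∀ t ∈ Icc a t₀, HasDerivWithinAt f₂ (v t (f₂ t)) (Icc a t₀) t := by
    intro t ht
    have hσ : HasDerivWithinAt (fun s : ℝ => a + t₀ - s) (-1) (Icc a t₀) t := by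
      simpa using ((hasDerivAt_id t).const_sub (a + t₀)).hasDerivWithinAt
    have hmem : a + t₀ - t ∈ Icc a t₀ := ⟨by linarith [ht.2], by linarith [ht.1]⟩
    have hmaps : MapsTo (fun s : ℝ => a + t₀ - s) (Icc a t₀) (Icc a t₀) := by
      intro s hs
      simp only [mem_Icc] at hs ⊢
      constructor <;> linarith
    have := (hg (a + t₀ - t) hmem).scomp t hσ hmaps
    simpa [w, f₂, Function.comp_def] using this
  obtain ⟨F, hF1, hF2, hF3⟩ := ode_glue v ht₀.1 ht₀.2 (by rw [hf₂v, hf₁v]) hf₂ hf₁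
  exact ⟨F, by rw [hF1 t₀ le_rfl, hf₂v], hF3⟩


/-- Global existence on all of `ℝ`. -/
lemma ode_global_exists (v : ℝ → E → E) (hc : ∀ x, Continuous fun t => v t x)
    (h0 : ∀ t, v t 0 = 0)
    (hlip : ∀ a b : ℝ, ∃ K : ℝ≥0, ∀ t ∈ Icc a b, LipschitzWith K (v t))
    (t₀ : ℝ) (x₀ : E) :
    ∃ F : ℝ → E, F t₀ = x₀ ∧ ∀ t, HasDerivAt F (v t (F t)) t := by
  have hmem : ∀ n : ℕ, t₀ ∈ Icc (t₀ - (n:ℝ)) (t₀ + (n:ℝ)) := by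
    intro n
    have : (0:ℝ) ≤ (n:ℝ) := n.cast_nonneg
    constructor <;> linarith
  choose f hfv hfd using fun n : ℕ => ode_chain_center v hc h0 hlip (hmem n) x₀
  -- continuity on the interval
  have hfc : ∀ n : ℕ, ContinuousOn (f n) (Icc (t₀ - (n:ℝ)) (t₀ + (n:ℝ))) :=
    fun n t ht => (hfd n t ht).continuousWithinAt
  -- derivative at interior points
  have hfd' : ∀ n : ℕ, ∀ t ∈ Ioo (t₀ - (n:ℝ)) (t₀ + (n:ℝ)),
      HasDerivAt (f n) (v t (f n t)) t := by
    intro n t ht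
    exact (hfd n t (Ioo_subset_Icc_self ht)).hasDerivAt (Icc_mem_nhds ht.1 ht.2)
  -- agreement by uniqueness
  have agree : ∀ m n : ℕ, m ≤ n → ∀ t ∈ Icc (t₀ - (m:ℝ)) (t₀ + (m:ℝ)), f m t = f n t := by
    intro m n hmn
    rcases Nat.eq_zero_or_pos m with rfl | hm
    · intro t ht
      have : t = t₀ := by
        simp only [Nat.cast_zero, sub_zero, add_zero] at ht
        exact le_antisymm ht.2 ht.1
      rw [this, hfv, hfv]
    · have hmR : (0:ℝ) < (m:ℝ) := by exact_mod_cast hm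
      have hcast : (m:ℝ) ≤ (n:ℝ) := by exact_mod_cast hmn
      obtain ⟨K, hK⟩ := hlip (t₀ - (m:ℝ)) (t₀ + (m:ℝ))
      set proj : ℝ → ℝ := fun s => max (t₀ - (m:ℝ)) (min (t₀ + (m:ℝ)) s) with hproj
      set v' : ℝ → E → E := fun s x => v (proj s) x with hv'
      have hprojmem : ∀ s, proj s ∈ Icc (t₀ - (m:ℝ)) (t₀ + (m:ℝ)) := by
        intro s
        refine ⟨le_max_left _ _, max_le (by linarith) (min_le_left _ _)⟩
      have hprojid : ∀ s ∈ Ioo (t₀ - (m:ℝ)) (t₀ + (m:ℝ)), proj s = s := by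
        intro s hs
        have h1 : proj s = max (t₀ - (m:ℝ)) (min (t₀ + (m:ℝ)) s) := rfl
        rw [h1, min_eq_right hs.2.le, max_eq_right hs.1.le]
      have hv'lip : ∀ s, LipschitzOnWith K (v' s) (univ : Set E) :=
        fun s => ((hK _ (hprojmem s))).lipschitzOnWith
      have key := ODE_solution_unique_of_mem_Icc (v := v') (s := fun _ => (univ : Set E))
        (K := K) (fun s _ => hv'lip s) (t₀ := t₀)
        (ht := ⟨by linarith, by linarith⟩)
        (hf := (hfc m))
        (hf' := ?_) (hfs := fun _ _ => trivial)
        (hg := (hfc n).mono (Icc_subset_Icc (by linarith) (by linarith)))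
        (hg' := ?_) (hgs := fun _ _ => trivial)
        (heq := by rw [hfv, hfv])
      · exact key
      · intro s hs
        rw [hv']
        simp only
        rw [hprojid s hs]
        exact hfd' m s hs
      · intro s hs
        rw [hv']
        simp only
        rw [hprojid s hs]
        refine hfd' n s ⟨by linarith [hs.1], by linarith [hs.2]⟩
  -- the global function
  set F : ℝ → E := fun t => f (⌈|t - t₀|⌉₊ + 1) t with hF
  have hFagree : ∀ n : ℕ, ∀ s, |s - t₀| < (n:ℝ) - 1 → F s = f n s := by
    intro n s hs
    rcases Nat.eq_zero_or_pos n with rfl | hn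
    · exfalso
      push_cast at hs
      linarith [abs_nonneg (s - t₀)]
    have h1 : |s - t₀| ≤ ((⌈|s - t₀|⌉₊ + 1 : ℕ) : ℝ) := by
      push_cast
      have := Nat.le_ceil (|s - t₀|)
      linarith
    have h2 : (⌈|s - t₀|⌉₊ + 1 : ℕ) ≤ n := by
      have hcl : ⌈|s - t₀|⌉₊ ≤ n - 1 := by
        apply Nat.ceil_le.2
        have h3 : ((n:ℝ) - 1) ≤ ((n - 1 : ℕ) : ℝ) := by
          push_cast [Nat.cast_sub hn]
          linarith
        linarith [hs.le]
      omega
    apply agree _ n h2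
    rw [abs_sub_le_iff] at h1
    constructor <;> push_cast at h1 ⊢ <;> linarith [h1.1, h1.2]
  refine ⟨F, ?_, ?_⟩
  · rw [hF]
    simp only [sub_self, abs_zero, Nat.ceil_zero]
    exact hfv 1
  · intro t
    set n : ℕ := ⌈|t - t₀|⌉₊ + 2 with hn
    have hceil : |t - t₀| ≤ ((n:ℝ)) - 2 := by
      rw [hn]; push_cast
      linarith [Nat.le_ceil (|t - t₀|)]
    have htIoo : t ∈ Ioo (t₀ - ((n:ℝ) - 1)) (t₀ + ((n:ℝ) - 1)) := by
      rw [abs_sub_le_iff] at hceil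
      constructor <;> [linarith [hceil.2]; linarith [hceil.1]]
    have hder : HasDerivAt (f n) (v t (f n t)) t := by
      apply hfd' n t
      rw [abs_sub_le_iff] at hceil
      constructor <;> [linarith [hceil.2]; linarith [hceil.1]]
    have hev : F =ᶠ[nhds t] f n := by
      have hopen : Ioo (t₀ - ((n:ℝ) - 1)) (t₀ + ((n:ℝ) - 1)) ∈ nhds t :=
        (isOpen_Ioo).mem_nhds htIoo
      filter_upwards [hopen] with s hs
      apply hFagree n s
      rw [abs_sub_lt_iff]
      constructor <;> [linarith [hs.2]; linarith [hs.1]]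
    have hFt : F t = f n t := hFagree n t (by
      rw [abs_sub_lt_iff]
      constructor <;> [linarith [htIoo.2]; linarith [htIoo.1]])
    rw [hFt]
    exact hder.congr_of_eventuallyEq hev


end GenODE

lemma hasDerivAt_fst' {F : ℝ → ℝ × ℝ} {c : ℝ × ℝ} {t : ℝ} (h : HasDerivAt F c t) :
    HasDerivAt (fun s => (F s).1) c.1 t := by
  have h2 := (h.hasFDerivAt).fst
  simpa using h2.hasDerivAt

lemma hasDerivAt_snd' {F : ℝ → ℝ × ℝ} {c : ℝ × ℝ} {t : ℝ} (h : HasDerivAt F c t) :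
    HasDerivAt (fun s => (F s).2) c.2 t := by
  have h2 := (h.hasFDerivAt).snd
  simpa using h2.hasDerivAt

/-- Global solution of the second-order linear ODE as a first-order system. -/
lemma lin2_exists (lam : ℝ) (δ : ℝ → ℝ) (hδc : Continuous δ) (t₀ : ℝ) (x₀ : ℝ × ℝ) :
    ∃ F : ℝ → ℝ × ℝ, F t₀ = x₀ ∧
      ∀ t, HasDerivAt F ((F t).2, -(2 * δ t * (F t).2) - lam ^ 2 * (F t).1) t := by
  set v : ℝ → ℝ × ℝ → ℝ × ℝ := fun t p => (p.2, -(2 * δ t * p.2) - lam ^ 2 * p.1) with hv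
  have hc : ∀ p : ℝ × ℝ, Continuous fun t => v t p := by
    intro p
    apply Continuous.prodMk continuous_const
    exact (((continuous_const.mul hδc).mul continuous_const).neg).sub continuous_const
  have h0 : ∀ t, v t 0 = 0 := by intro t; simp [hv]
  have hlip : ∀ a b : ℝ, ∃ K : ℝ≥0, ∀ t ∈ Icc a b, LipschitzWith K (v t) := by
    intro a b
    obtain ⟨M, hM⟩ := isCompact_Icc.exists_bound_of_continuousOn (hδc.continuousOn (s := Icc a b))
    set M' : ℝ := max M 0 with hM'
    have hM'nn : 0 ≤ M' := le_max_right _ _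
    have hMle : ∀ t ∈ Icc a b, |δ t| ≤ M' := by
      intro t ht
      exact le_trans (by simpa using hM t ht) (le_max_left _ _)
    refine ⟨(1 + 2 * M' + lam ^ 2).toNNReal, fun t ht => ?_⟩
    apply LipschitzWith.of_dist_le_mul
    intro x y
    rw [Real.coe_toNNReal _ (by positivity), Prod.dist_eq, Prod.dist_eq]
    have hd1 : dist x.1 y.1 ≤ max (dist x.1 y.1) (dist x.2 y.2) := le_max_left _ _
    have hd2 : dist x.2 y.2 ≤ max (dist x.1 y.1) (dist x.2 y.2) := le_max_right _ _
    have hdnn : 0 ≤ max (dist x.1 y.1) (dist x.2 y.2) := le_max_of_le_left dist_nonneg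
    apply max_le
    · have : dist (v t x).1 (v t y).1 = dist x.2 y.2 := rfl
      rw [this]
      nlinarith [sq_nonneg lam]
    · have he : (v t x).2 - (v t y).2
          = (-(2 * δ t)) * (x.2 - y.2) + (-(lam ^ 2)) * (x.1 - y.1) := by
        simp only [hv]; ring
      rw [Real.dist_eq, he]
      have h1 : |(-(2 * δ t)) * (x.2 - y.2) + (-(lam ^ 2)) * (x.1 - y.1)|
          ≤ |(-(2 * δ t)) * (x.2 - y.2)| + |(-(lam ^ 2)) * (x.1 - y.1)| := abs_add_le _ _
      rw [abs_mul, abs_mul, abs_neg, abs_neg, abs_mul, abs_of_nonneg (sq_nonneg lam)] at h1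
      have h2 : |(2:ℝ)| = 2 := by norm_num
      rw [h2] at h1
      have h3 : |δ t| ≤ M' := hMle t ht
      have h4 := abs_nonneg (x.2 - y.2)
      have h5 := abs_nonneg (x.1 - y.1)
      have h6 : |x.2 - y.2| ≤ max (dist x.1 y.1) (dist x.2 y.2) := by
        rw [Real.dist_eq, Real.dist_eq]; exact le_max_right _ _
      have h7 : |x.1 - y.1| ≤ max (dist x.1 y.1) (dist x.2 y.2) := by
        rw [Real.dist_eq, Real.dist_eq]; exact le_max_left _ _
      nlinarith [sq_nonneg lam, abs_nonneg (δ t)]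
  obtain ⟨F, h1, h2⟩ := ode_global_exists v hc h0 hlip t₀ x₀
  exact ⟨F, h1, h2⟩

theorem stmt_11 (lam T : ℝ) (hlam : 0 < lam) (hT : 0 ≤ T)
    (δ : ℝ → ℝ) (hδc : Continuous δ) (hδnonneg : ∀ t, 0 ≤ δ t)
    (hδge : ∀ t ≥ T, lam ≤ δ t) :
    ∃ Tstar : ℝ, T ≤ Tstar ∧ ∃ u : ℝ → ℝ, ContDiff ℝ 2 u ∧
      (∀ t ≥ (0:ℝ),
        deriv (deriv u) t + 2 * δ t * deriv u t + lam ^ 2 * u t = 0) ∧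
      ∀ t ≥ Tstar, t * Real.exp (-lam * t) ≤ |u t| := by
  set T' : ℝ := max T (1 / lam) with hT'def
  have hT'T : T ≤ T' := le_max_left _ _
  have hT'pos : 0 < T' := lt_of_lt_of_le (by positivity) (le_max_right _ _)
  have hlamT' : 1 ≤ lam * T' := by
    have h1 : 1 / lam ≤ T' := le_max_right _ _
    rw [div_le_iff₀ hlam] at h1
    linarith [mul_comm T' lam]
  -- the model solution and its derivative
  set w : ℝ → ℝ := fun s => s * exp (-lam * s) with hw_def
  set w2 : ℝ → ℝ := fun s => exp (-lam * s) * (1 - lam * s) with hw2_def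
  have hexp : ∀ t : ℝ, HasDerivAt (fun s : ℝ => exp (-lam * s)) (exp (-lam * t) * (-lam)) t := by
    intro t
    have h1 : HasDerivAt (fun s : ℝ => -lam * s) (-lam) t := by
      simpa using (hasDerivAt_id t).const_mul (-lam)
    exact h1.exp
  have hw : ∀ t, HasDerivAt w (w2 t) t := by
    intro t
    have := (hasDerivAt_id t).mul (hexp t)
    rw [hw_def, hw2_def]
    refine this.congr_deriv ?_
    simp only [id_eq]
    ring
  have hw2 : ∀ t, HasDerivAt w2 (-(2 * lam * w2 t) - lam ^ 2 * w t) t := by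
    intro t
    have h1 : HasDerivAt (fun s : ℝ => 1 - lam * s) (-lam) t := by
      simpa using ((hasDerivAt_id t).const_mul lam).const_sub 1
    have := (hexp t).mul h1
    rw [hw2_def, hw_def]
    refine this.congr_deriv ?_
    beta_reduce
    ring
  -- the actual solution
  obtain ⟨F, hF0, hFd⟩ := lin2_exists lam δ hδc T' (w T', w2 T')
  set u : ℝ → ℝ := fun s => (F s).1 with hu_def
  set p : ℝ → ℝ := fun s => (F s).2 with hp_def
  have hu : ∀ t, HasDerivAt u (p t) t := fun t => hasDerivAt_fst' (hFd t)
  have hp : ∀ t, HasDerivAt p (-(2 * δ t * p t) - lam ^ 2 * u t) t :=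
    fun t => hasDerivAt_snd' (hFd t)
  have huT' : u T' = w T' := by show (F T').1 = w T'; rw [hF0]
  have hpT' : p T' = w2 T' := by show (F T').2 = w2 T'; rw [hF0]
  have hudiff : Differentiable ℝ u := fun t => (hu t).differentiableAt
  have hpdiff : Differentiable ℝ p := fun t => (hp t).differentiableAt
  have hucont : Continuous u := hudiff.continuous
  have hpcont : Continuous p := hpdiff.continuous
  have hwcont : Continuous w := by
    rw [hw_def]
    exact continuous_id.mul (Real.continuous_exp.comp (continuous_const.mul continuous_id))
  have hwpos : ∀ s : ℝ, 0 < s → 0 < w s := fun s hs => mul_pos hs (exp_pos _)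
  -- the comparison argument
  have main : ∀ t, T' ≤ t → w t / 2 < u t := by
    by_contra hcon
    push_neg at hcon
    obtain ⟨t₂, ht₂, hle⟩ := hcon
    set A : Set ℝ := {s | T' ≤ s ∧ u s ≤ w s / 2} with hA
    have hAclosed : IsClosed A := by
      have : A = Ici T' ∩ {s | u s ≤ w s / 2} := by
        ext s; simp [hA, mem_Ici]
      rw [this]
      exact isClosed_Ici.inter (isClosed_le hucont (hwcont.div_const 2))
    have hAne : A.Nonempty := ⟨t₂, ht₂, hle⟩
    have hAbdd : BddBelow A := ⟨T', fun s hs => hs.1⟩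
    set t₁ : ℝ := sInf A with ht₁def
    have ht₁A : t₁ ∈ A := hAclosed.csInf_mem hAne hAbdd
    have ht₁ge : T' ≤ t₁ := ht₁A.1
    have hwT'pos : 0 < w T' := hwpos T' hT'pos
    have ht₁gt : T' < t₁ := by
      rcases eq_or_lt_of_le ht₁ge with heq | h
      · exfalso
        have h2 := ht₁A.2
        rw [← heq, huT'] at h2
        linarith
      · exact h
    have hbelow : ∀ s, T' ≤ s → s < t₁ → w s / 2 < u s := by
      intro s h1 h2
      by_contra hcon2
      exact absurd (csInf_le hAbdd ⟨h1, le_of_not_gt hcon2⟩) (not_le.2 h2)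
    have hupos : ∀ s ∈ Ioo T' t₁, 0 < u s := by
      intro s hs
      have h1 := hbelow s hs.1.le hs.2
      have h2 := hwpos s (hT'pos.trans hs.1)
      linarith
    -- the Wronskian-type function
    set hh : ℝ → ℝ := fun s => p s * w s - u s * w2 s with hhdef
    have hhT' : hh T' = 0 := by rw [hhdef]; simp only; rw [huT', hpT']; ring
    have hhd : ∀ s, HasDerivAt hh (-(2 * δ s) * hh s + 2 * (lam - δ s) * (u s * w2 s)) s := by
      intro s
      have h1 := ((hp s).mul (hw s)).sub ((hu s).mul (hw2 s))
      refine h1.congr_deriv ?_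
      beta_reduce
      ring
    -- integrating factor
    set D : ℝ → ℝ := fun s => ∫ x in T'..s, 2 * δ x with hDdef
    have hD : ∀ s, HasDerivAt D (2 * δ s) s := fun s =>
      ((continuous_const.mul hδc).integral_hasStrictDerivAt T' s).hasDerivAt
    set G : ℝ → ℝ := fun s => exp (D s) * hh s with hGdef
    have hGd : ∀ s, HasDerivAt G (exp (D s) * (2 * (lam - δ s) * (u s * w2 s))) s := by
      intro s
      have h1 := ((hD s).exp).mul (hhd s)
      refine h1.congr_deriv ?_
      beta_reduce
      ring
    have hGmono : MonotoneOn G (Icc T' t₁) := by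
      apply monotoneOn_of_deriv_nonneg (convex_Icc _ _)
      · exact fun s _ => (hGd s).differentiableAt.continuousAt.continuousWithinAt
      · intro s _
        exact (hGd s).differentiableAt.differentiableWithinAt
      · intro s hs
        rw [interior_Icc] at hs
        rw [(hGd s).deriv]
        have h1 : lam ≤ δ s := hδge s (hT'T.trans hs.1.le)
        have h2 : 0 < u s := hupos s hs
        have h3 : w2 s ≤ 0 := by
          rw [hw2_def]
          simp only
          have h4 : 1 ≤ lam * s := by nlinarith [hs.1.le]
          exact mul_nonpos_of_nonneg_of_nonpos (exp_pos _).le (by linarith)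
        have h5 : 0 ≤ (δ s - lam) * (u s * (-(w2 s))) :=
          mul_nonneg (by linarith) (mul_nonneg h2.le (by linarith))
        nlinarith [exp_pos (D s), mul_nonneg (exp_pos (D s)).le h5]
    have hhnn : ∀ s ∈ Icc T' t₁, 0 ≤ hh s := by
      intro s hs
      have h1 : G T' ≤ G s := hGmono ⟨le_rfl, ht₁ge⟩ hs hs.1
      have h2 : G T' = 0 := by rw [hGdef]; simp [hhT']
      rw [h2, hGdef] at h1
      simp only at h1
      nlinarith [exp_pos (D s)]
    -- the quotient is monotone
    have hwposIcc : ∀ s ∈ Icc T' t₁, 0 < w s := fun s hs => hwpos s (lt_of_lt_of_le hT'pos hs.1)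
    set q : ℝ → ℝ := fun s => u s / w s with hqdef
    have hqd : ∀ s ∈ Icc T' t₁, HasDerivAt q (hh s / (w s) ^ 2) s := by
      intro s hs
      have h1 := (hu s).div (hw s) (ne_of_gt (hwposIcc s hs))
      exact h1
    have hqmono : MonotoneOn q (Icc T' t₁) := by
      apply monotoneOn_of_deriv_nonneg (convex_Icc _ _)
      · exact ContinuousOn.div hucont.continuousOn hwcont.continuousOn
          (fun s hs => ne_of_gt (hwposIcc s hs))
      · intro s hs
        rw [interior_Icc] at hs
        exact (hqd s (Ioo_subset_Icc_self hs)).differentiableAt.differentiableWithinAt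
      · intro s hs
        rw [interior_Icc] at hs
        rw [(hqd s (Ioo_subset_Icc_self hs)).deriv]
        exact div_nonneg (hhnn s (Ioo_subset_Icc_self hs)) (sq_nonneg _)
    have hfin : 1 ≤ q t₁ := by
      have h1 : q T' ≤ q t₁ := hqmono ⟨le_rfl, ht₁ge⟩ ⟨ht₁ge, le_rfl⟩ ht₁ge
      have h2 : q T' = 1 := by
        rw [hqdef]; simp only; rw [huT']
        exact div_self (ne_of_gt hwT'pos)
      linarith
    have hwt₁pos : 0 < w t₁ := hwposIcc t₁ ⟨ht₁ge, le_rfl⟩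
    have hut₁ : w t₁ ≤ u t₁ := by
      rw [hqdef] at hfin
      simp only at hfin
      rw [le_div_iff₀ hwt₁pos] at hfin
      linarith
    have h4 := ht₁A.2
    linarith
  -- final packaging
  have hderiv1 : deriv (fun s => 2 * u s) = fun s => 2 * p s :=
    funext fun s => ((hu s).const_mul 2).deriv
  refine ⟨T', hT'T, fun s => 2 * u s, ?_, ?_, ?_⟩
  · rw [show (2 : WithTop ℕ∞) = 1 + 1 from by norm_num, contDiff_succ_iff_deriv]
    refine ⟨fun s => ((hu s).const_mul 2).differentiableAt, by simp, ?_⟩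
    rw [hderiv1, contDiff_one_iff_deriv]
    refine ⟨fun s => ((hp s).const_mul 2).differentiableAt, ?_⟩
    have hderiv2 : deriv (fun s => 2 * p s)
        = fun s => 2 * (-(2 * δ s * p s) - lam ^ 2 * u s) :=
      funext fun s => ((hp s).const_mul 2).deriv
    rw [hderiv2]
    exact continuous_const.mul
      ((((continuous_const.mul hδc).mul hpcont).neg).sub (continuous_const.mul hucont))
  · intro t _
    rw [hderiv1]
    rw [show deriv (fun s => 2 * p s) t = 2 * (-(2 * δ t * p t) - lam ^ 2 * u t) from
      ((hp t).const_mul 2).deriv]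
    ring
  · intro t ht
    have h1 := main t ht
    have h2 : 0 < w t := hwpos t (lt_of_lt_of_le hT'pos ht)
    have h3 : 0 < u t := by linarith
    rw [abs_of_pos (by linarith : (0:ℝ) < 2 * u t)]
    have h4 : t * Real.exp (-lam * t) = w t := rfl
    rw [h4]
    linarith
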